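/- The q-binomial theorem: for complex q, z with |q| < 1 and |z| < 1, and any complex a, the series ∑_{n=0}^∞ ((a;q)_n / (q;q)_n) z^n converges and equals (az;q)_∞ / (z;q)_∞. -/

import Mathlib

/-- Finite q-Pochhammer symbol: (a;q)_n = ∏_{k=0}^{n-1} (1 - a q^k). -/
noncomputable def qp (a q : ℂ) (n : ℕ) : ℂ := ∏ k ∈ Finset.range n, (1 - a * q ^ k)

/-- Infinite q-Pochhammer symbol: (a;q)_∞ = ∏_{k=0}^∞ (1 - a q^k). -/
noncomputable def qpInf (a q : ℂ) : ℂ := ∏' k : ℕ, (1 - a * q ^ k)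

open Complex Filter Finset Topology

lemma factor_ne_zero {w q : ℂ} (hw : ‖w‖ < 1) (hq : ‖q‖ ≤ 1) (k : ℕ) : 1 - w * q ^ k ≠ 0 := by
  intro h
  have h1 : w * q ^ k = 1 := by linear_combination -h
  have : ‖w * q ^ k‖ < 1 := by
    rw [norm_mul, norm_pow]
    have hk : ‖q‖ ^ k ≤ 1 := pow_le_one₀ (norm_nonneg q) hq
    calc ‖w‖ * ‖q‖ ^ k ≤ ‖w‖ * 1 := by rw [mul_one]; exact mul_le_of_le_one_right (norm_nonneg w) hk
      _ = ‖w‖ := mul_one _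
      _ < 1 := hw
  rw [h1, norm_one] at this
  exact lt_irrefl _ this

lemma qp_ne_zero {w q : ℂ} (hw : ‖w‖ < 1) (hq : ‖q‖ ≤ 1) (n : ℕ) : qp w q n ≠ 0 :=
  Finset.prod_ne_zero_iff.mpr fun k _ => factor_ne_zero hw hq k

lemma summable_log {q : ℂ} (hq : ‖q‖ < 1) (w : ℂ) :
    Summable (fun k : ℕ => Complex.log (1 - w * q ^ k)) := by
  have hpow : Tendsto (fun n : ℕ => ‖w * q ^ n‖) atTop (𝓝 0) := by
    have := (tendsto_pow_atTop_nhds_zero_of_norm_lt_one hq).const_mul w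
    rw [mul_zero] at this
    simpa using this.norm
  obtain ⟨N, hN⟩ := (hpow.eventually_le_const (by norm_num : (0:ℝ) < 1/2)).exists_forall_of_atTop
  rw [← summable_nat_add_iff N]
  apply Summable.of_norm_bounded (g := fun k => 3/2 * ‖w * q ^ N‖ * ‖q‖ ^ k)
  · exact (summable_geometric_of_lt_one (norm_nonneg q) hq).mul_left _
  · intro k
    have hb : ‖-(w * q ^ (k + N))‖ ≤ 1/2 := by
      rw [norm_neg]
      exact hN (k + N) (Nat.le_add_left N k)
    have := Complex.norm_log_one_add_half_le_self hb
    have he : (1 : ℂ) + -(w * q ^ (k + N)) = 1 - w * q ^ (k + N) := by ring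
    rw [he] at this
    refine this.trans (le_of_eq ?_)
    rw [norm_neg, norm_mul, norm_pow, pow_add, norm_mul, norm_pow]
    ring

lemma hasProd_qpInf {q : ℂ} (hq : ‖q‖ < 1) (w : ℂ) :
    HasProd (fun k : ℕ => 1 - w * q ^ k) (qpInf w q) := by
  by_cases h : ∀ k : ℕ, 1 - w * q ^ k ≠ 0
  · exact Complex.hasProd_of_hasSum_log (f := fun k : ℕ => 1 - w * q ^ k)
      (fun k => h k) (summable_log hq w).hasSum |>.multipliable.hasProd
  · push_neg at h
    obtain ⟨k0, hk0⟩ := h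
    have h0 : HasProd (fun k : ℕ => 1 - w * q ^ k) 0 := by
      unfold HasProd
      apply Tendsto.congr' _ tendsto_const_nhds
      filter_upwards [eventually_ge_atTop ({k0} : Finset ℕ)] with s hs
      exact (Finset.prod_eq_zero (hs (Finset.mem_singleton_self k0)) hk0).symm
    have : qpInf w q = 0 := h0.tprod_eq
    rw [this]
    exact h0

lemma tendsto_qp {q : ℂ} (hq : ‖q‖ < 1) (w : ℂ) :
    Tendsto (fun N => qp w q N) atTop (𝓝 (qpInf w q)) :=
  (hasProd_qpInf hq w).tendsto_prod_nat

lemma qpInf_ne_zero {w q : ℂ} (hw : ‖w‖ < 1) (hq : ‖q‖ < 1) : qpInf w q ≠ 0 := by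
  have h2 := Complex.cexp_tsum_eq_tprod (f := fun k : ℕ => 1 - w * q ^ k)
    (fun k => factor_ne_zero hw hq.le k) (summable_log hq w)
  rw [qpInf, ← h2]
  exact Complex.exp_ne_zero _

noncomputable def qc (a q : ℂ) (n : ℕ) : ℂ := qp a q n / qp q q n

lemma qp_succ (w q : ℂ) (n : ℕ) : qp w q (n + 1) = qp w q n * (1 - w * q ^ n) :=
  Finset.prod_range_succ _ _

lemma qc_zero (a q : ℂ) : qc a q 0 = 1 := by simp [qc, qp]

lemma qc_rec {q : ℂ} (hq : ‖q‖ < 1) (a : ℂ) (n : ℕ) :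
    qc a q (n + 1) * (1 - q * q ^ n) = qc a q n * (1 - a * q ^ n) := by
  have h1 : qp q q n ≠ 0 := qp_ne_zero hq hq.le n
  have h2 : qp q q (n + 1) ≠ 0 := qp_ne_zero hq hq.le (n + 1)
  have h3 : qp q q (n + 1) = qp q q n * (1 - q * q ^ n) := qp_succ q q n
  unfold qc
  rw [qp_succ a q n, h3]
  have h4 : 1 - q * q ^ n ≠ 0 := by
    intro h; rw [h3, h, mul_zero] at h2; exact h2 rfl
  rw [← div_div, div_mul_cancel₀ _ h4]
  ring

lemma summable_qc_abs {q : ℂ} (hq : ‖q‖ < 1) (a : ℂ) {r : ℝ} (hr0 : 0 ≤ r) (hr : r < 1) :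
    Summable (fun n => ‖qc a q n‖ * r ^ n) := by
  by_cases hz : ∃ k : ℕ, 1 - a * q ^ k = 0
  · obtain ⟨k0, hk0⟩ := hz
    apply summable_of_ne_finset_zero (s := Finset.range (k0 + 1))
    intro n hn
    rw [Finset.mem_range, not_lt] at hn
    have : qp a q n = 0 :=
      Finset.prod_eq_zero (Finset.mem_range.mpr (lt_of_lt_of_le (Nat.lt_succ_self k0) hn)) hk0
    simp [qc, this]
  · push_neg at hz
    rcases eq_or_lt_of_le hr0 with hr0' | hr0'
    · apply summable_of_ne_finset_zero (s := Finset.range 1)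
      intro n hn
      rw [Finset.mem_range, not_lt] at hn
      rw [← hr0', zero_pow (by omega), mul_zero]
    · have hqcne : ∀ n, qc a q n ≠ 0 := by
        intro n
        exact div_ne_zero (Finset.prod_ne_zero_iff.mpr fun k _ => hz k) (qp_ne_zero hq hq.le n)
      have hfne : ∀ n : ℕ, ‖qc a q n‖ * r ^ n ≠ 0 := fun n =>
        mul_ne_zero (norm_ne_zero_iff.mpr (hqcne n)) (pow_ne_zero n (ne_of_gt hr0'))
      apply summable_of_ratio_test_tendsto_lt_one hr (Eventually.of_forall hfne)
      have key : ∀ n : ℕ, ‖‖qc a q (n+1)‖ * r ^ (n+1)‖ / ‖‖qc a q n‖ * r ^ n‖ =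
          r * (‖1 - a * q ^ n‖ / ‖1 - q * q ^ n‖) := by
        intro n
        have h4 : (1 : ℂ) - q * q ^ n ≠ 0 := factor_ne_zero hq hq.le n
        have hrec : qc a q (n+1) = qc a q n * (1 - a * q ^ n) / (1 - q * q ^ n) := by
          rw [eq_div_iff h4]
          exact qc_rec hq a n
        rw [hrec]
        have hpos : (0:ℝ) < ‖qc a q n‖ * r ^ n := by
          have := norm_pos_iff.mpr (hqcne n)
          positivity
        rw [Real.norm_of_nonneg (by positivity), Real.norm_of_nonneg (by positivity)]
        rw [norm_div, norm_mul, pow_succ]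
        have hA : ‖qc a q n‖ ≠ 0 := norm_ne_zero_iff.mpr (hqcne n)
        have hD : ‖1 - q * q ^ n‖ ≠ 0 := norm_ne_zero_iff.mpr h4
        have hrn : r ^ n ≠ 0 := pow_ne_zero n hr0'.ne'
        field_simp [hA, hD, hrn]
      apply Tendsto.congr (fun n => (key n).symm)
      have hq0 : Tendsto (fun n : ℕ => q ^ n) atTop (𝓝 0) :=
        tendsto_pow_atTop_nhds_zero_of_norm_lt_one hq
      have h1 : Tendsto (fun n : ℕ => ‖1 - a * q ^ n‖) atTop (𝓝 ‖(1:ℂ) - a * 0‖) :=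
        ((tendsto_const_nhds.sub (tendsto_const_nhds.mul hq0))).norm
      have h2 : Tendsto (fun n : ℕ => ‖1 - q * q ^ n‖) atTop (𝓝 ‖(1:ℂ) - q * 0‖) :=
        ((tendsto_const_nhds.sub (tendsto_const_nhds.mul hq0))).norm
      have h3 : Tendsto (fun n : ℕ => r * (‖1 - a * q ^ n‖ / ‖1 - q * q ^ n‖)) atTop
          (𝓝 (r * (‖(1:ℂ) - a * 0‖ / ‖(1:ℂ) - q * 0‖))) := by
        apply Tendsto.const_mul
        apply h1.div h2
        simp
      simpa using h3

lemma summable_qS {q : ℂ} (hq : ‖q‖ < 1) (a : ℂ) {w : ℂ} (hw : ‖w‖ < 1) :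
    Summable (fun n : ℕ => qc a q n * w ^ n) := by
  apply Summable.of_norm
  have := summable_qc_abs hq a (norm_nonneg w) hw
  simpa [norm_mul, norm_pow] using this

noncomputable def qS (a q w : ℂ) : ℂ := ∑' n : ℕ, qc a q n * w ^ n

lemma hasSum_qS {q : ℂ} (hq : ‖q‖ < 1) (a : ℂ) {w : ℂ} (hw : ‖w‖ < 1) :
    HasSum (fun n : ℕ => qc a q n * w ^ n) (qS a q w) :=
  (summable_qS hq a hw).hasSum

lemma qS_FE {q : ℂ} (hq : ‖q‖ < 1) (a : ℂ) {w : ℂ} (hw : ‖w‖ < 1) :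
    (1 - w) * qS a q w = (1 - a * w) * qS a q (q * w) := by
  have hqw : ‖q * w‖ < 1 := by
    rw [norm_mul]
    calc ‖q‖ * ‖w‖ ≤ 1 * ‖w‖ := by
          apply mul_le_mul_of_nonneg_right hq.le (norm_nonneg w)
      _ = ‖w‖ := one_mul _
      _ < 1 := hw
  have hS := hasSum_qS hq a hw
  have hT := hasSum_qS hq a hqw
  set g : ℕ → ℂ := fun n => match n with | 0 => 0 | (k+1) => w * (qc a q k * w ^ k) with hg
  set h : ℕ → ℂ := fun n => match n with | 0 => 0 | (k+1) => (a * w) * (qc a q k * (q * w) ^ k)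
    with hh
  have hg1 : HasSum g (w * qS a q w) := by
    have h1 : HasSum (fun n : ℕ => g (n + 1)) (w * qS a q w) := hS.mul_left w
    have h2 := (hasSum_nat_add_iff (f := g) 1).mp h1
    have h3 : g 0 = 0 := rfl
    simpa [h3] using h2
  have hh1 : HasSum h ((a * w) * qS a q (q * w)) := by
    have h1 : HasSum (fun n : ℕ => h (n + 1)) ((a * w) * qS a q (q * w)) := hT.mul_left (a * w)
    have h2 := (hasSum_nat_add_iff (f := h) 1).mp h1
    have h3 : h 0 = 0 := rfl
    simpa [h3] using h2
  have hL := hS.sub hg1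
  have hR := hT.sub hh1
  have heq : (fun n : ℕ => qc a q n * w ^ n - g n) =
      (fun n : ℕ => qc a q n * (q * w) ^ n - h n) := by
    funext n
    match n with
    | 0 => simp [hg, hh]
    | (k+1) =>
      show qc a q (k+1) * w ^ (k+1) - w * (qc a q k * w ^ k) =
        qc a q (k+1) * (q*w) ^ (k+1) - (a*w) * (qc a q k * (q*w) ^ k)
      linear_combination (w ^ (k+1)) * qc_rec hq a k
  rw [heq] at hL
  have := hL.unique hR
  linear_combination this

/-- The q-binomial theorem. -/
theorem q_binomial_theorem (q z a : ℂ) (hq : ‖q‖ < 1) (hz : ‖z‖ < 1) :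
    HasSum (fun n : ℕ => qp a q n / qp q q n * z ^ n) (qpInf (a * z) q / qpInf z q) := by
  -- norm of q^N * z
  have hwN : ∀ N : ℕ, ‖q ^ N * z‖ ≤ ‖z‖ := by
    intro N
    rw [norm_mul, norm_pow]
    calc ‖q‖ ^ N * ‖z‖ ≤ 1 ^ N * ‖z‖ := by
          apply mul_le_mul_of_nonneg_right (pow_le_pow_left₀ (norm_nonneg q) hq.le N)
            (norm_nonneg z)
      _ = ‖z‖ := by rw [one_pow, one_mul]
  have hwN1 : ∀ N : ℕ, ‖q ^ N * z‖ < 1 := fun N => lt_of_le_of_lt (hwN N) hz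
  -- iteration
  have key : ∀ N : ℕ, qS a q z * qp z q N = qp (a * z) q N * qS a q (q ^ N * z) := by
    intro N
    induction N with
    | zero => simp [qp]
    | succ n ih =>
      rw [qp_succ, qp_succ, ← mul_assoc, ih]
      have hFE := qS_FE hq a (hwN1 n)
      have hexp : q * (q ^ n * z) = q ^ (n + 1) * z := by ring
      rw [hexp] at hFE
      have hz1 : (1 : ℂ) - z * q ^ n = 1 - (q ^ n * z) := by ring
      have hz2 : (1 : ℂ) - a * z * q ^ n = 1 - a * (q ^ n * z) := by ring
      rw [mul_assoc, mul_assoc, hz1, hz2]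
      calc qp (a*z) q n * (qS a q (q ^ n * z) * (1 - q ^ n * z))
          = qp (a*z) q n * ((1 - q ^ n * z) * qS a q (q ^ n * z)) := by ring
        _ = qp (a*z) q n * ((1 - a * (q ^ n * z)) * qS a q (q ^ (n+1) * z)) := by rw [hFE]
        _ = qp (a*z) q n * ((1 - a * (q ^ n * z)) * qS a q (q ^ (n+1) * z)) := rfl
  -- limit of qS (q^N z) is 1
  set r : ℝ := max ‖z‖ (1/2) with hrdef
  have hr1 : r < 1 := max_lt hz (by norm_num)
  have hr0 : 0 < r := lt_of_lt_of_le (by norm_num) (le_max_right _ _)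
  have hsum1 : Summable (fun n : ℕ => ‖qc a q (n+1)‖ * r ^ n) := by
    have h1 := (summable_nat_add_iff (f := fun n => ‖qc a q n‖ * r ^ n) 1).mpr
      (summable_qc_abs hq a hr0.le hr1)
    have h2 := h1.div_const r
    apply h2.congr
    intro n
    field_simp [pow_succ]
    ring
  set C : ℝ := ∑' n : ℕ, ‖qc a q (n+1)‖ * r ^ n with hC
  have hbound : ∀ N : ℕ, ‖qS a q (q ^ N * z) - 1‖ ≤ ‖q ^ N * z‖ * C := by
    intro N
    set w := q ^ N * z with hw
    have hS := hasSum_qS hq a (hwN1 N)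
    have hshift : HasSum (fun n : ℕ => qc a q (n+1) * w ^ (n+1)) (qS a q w - 1) := by
      apply (hasSum_nat_add_iff (f := fun n => qc a q n * w ^ n) 1).mpr
      have : (qS a q w - 1) + ∑ i ∈ Finset.range 1, qc a q i * w ^ i = qS a q w := by
        simp [qc_zero]
      rw [this]
      exact hS
    have hnorms : Summable (fun n : ℕ => ‖qc a q (n+1) * w ^ (n+1)‖) := by
      apply Summable.of_nonneg_of_le (fun n => norm_nonneg _)
        (fun n => ?_) (hsum1.mul_left ‖w‖)
      rw [norm_mul, norm_pow, pow_succ']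
      calc ‖qc a q (n+1)‖ * (‖w‖ * ‖w‖ ^ n) = ‖w‖ * (‖qc a q (n+1)‖ * ‖w‖ ^ n) := by ring
        _ ≤ ‖w‖ * (‖qc a q (n+1)‖ * r ^ n) := by
            apply mul_le_mul_of_nonneg_left _ (norm_nonneg w)
            apply mul_le_mul_of_nonneg_left _ (norm_nonneg _)
            exact pow_le_pow_left₀ (norm_nonneg w) ((hwN N).trans (le_max_left _ _)) n
    rw [← hshift.tsum_eq]
    calc ‖∑' n : ℕ, qc a q (n+1) * w ^ (n+1)‖ ≤ ∑' n : ℕ, ‖qc a q (n+1) * w ^ (n+1)‖ :=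
          norm_tsum_le_tsum_norm hnorms
      _ ≤ ∑' n : ℕ, ‖w‖ * (‖qc a q (n+1)‖ * r ^ n) := by
          apply Summable.tsum_le_tsum _ hnorms (hsum1.mul_left ‖w‖)
          intro n
          rw [norm_mul, norm_pow, pow_succ']
          calc ‖qc a q (n+1)‖ * (‖w‖ * ‖w‖ ^ n) = ‖w‖ * (‖qc a q (n+1)‖ * ‖w‖ ^ n) := by ring
            _ ≤ ‖w‖ * (‖qc a q (n+1)‖ * r ^ n) := by
                apply mul_le_mul_of_nonneg_left _ (norm_nonneg w)
                apply mul_le_mul_of_nonneg_left _ (norm_nonneg _)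
                exact pow_le_pow_left₀ (norm_nonneg w) ((hwN N).trans (le_max_left _ _)) n
      _ = ‖w‖ * C := by rw [tsum_mul_left]
  have hlimS : Tendsto (fun N : ℕ => qS a q (q ^ N * z)) atTop (𝓝 1) := by
    rw [tendsto_iff_norm_sub_tendsto_zero]
    apply squeeze_zero (fun N => norm_nonneg _) hbound
    have h1 : Tendsto (fun N : ℕ => ‖q ^ N * z‖) atTop (𝓝 0) := by
      have := ((tendsto_pow_atTop_nhds_zero_of_norm_lt_one hq).mul_const z).norm
      simpa using this
    have := h1.mul_const C
    simpa using this
  -- limits of both sides of key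
  have hL : Tendsto (fun N : ℕ => qS a q z * qp z q N) atTop (𝓝 (qS a q z * qpInf z q)) :=
    (tendsto_qp hq z).const_mul _
  have hR : Tendsto (fun N : ℕ => qp (a*z) q N * qS a q (q ^ N * z)) atTop
      (𝓝 (qpInf (a*z) q * 1)) := (tendsto_qp hq (a*z)).mul hlimS
  have hmain : qS a q z * qpInf z q = qpInf (a*z) q * 1 := by
    apply tendsto_nhds_unique _ hR
    exact hL.congr key
  rw [mul_one] at hmain
  have hne : qpInf z q ≠ 0 := qpInf_ne_zero hz hq
  have hval : qS a q z = qpInf (a*z) q / qpInf z q := by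
    rw [eq_div_iff hne]
    exact hmain
  have := hasSum_qS hq a hz
  rw [hval] at this
  exact this
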